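/- For local biretractions α, β of a commutative Hopf algebroid H over A, the inverse of the restricted bijection (α∗β)∘t : A·e^{α∗β} → A·(α∗β)(1_H) equals the composition (α∘t)^{-1} ∘ (β∘t)^{-1} of the inverses of the restricted bijections. -/
import Mathlib


open TensorProduct

/-- The unital ideal `A·e` generated by an element `e` of a commutative ring. -/
def idealOf {A : Type*} [CommRing A] (e : A) : Set A := Set.range (fun a => a * e)

/-- A commutative Hopf algebroid over a commutative base algebra `A`:
a commutative algebra `H` with source and target maps `s, t : A → H`,
comultiplication `Δ`, counit `ε` and antipode `S` satisfying the standard axioms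
(`S∘t = s`, `S∘s = t`, `S(h₍₁₎)h₍₂₎ = s(ε h)`, `h₍₁₎S(h₍₂₎) = t(ε h)`, etc.). -/
structure CommHopfAlgebroid (k A H : Type*) [CommRing k] [CommRing A] [CommRing H]
    [Algebra k A] [Algebra k H] where
  s : A →ₐ[k] H
  t : A →ₐ[k] H
  comul : H →ₐ[k] H ⊗[k] H
  counit : H →ₐ[k] A
  antipode : H →ₐ[k] H
  coassoc :
    (TensorProduct.assoc k H H H).toLinearMap ∘ₗ
      (TensorProduct.map comul.toLinearMap LinearMap.id) ∘ₗ comul.toLinearMap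
    = (TensorProduct.map LinearMap.id comul.toLinearMap) ∘ₗ comul.toLinearMap
  counit_left : (LinearMap.mul' k H) ∘ₗ
      (TensorProduct.map (t.toLinearMap ∘ₗ counit.toLinearMap) LinearMap.id) ∘ₗ
        comul.toLinearMap = LinearMap.id
  counit_right : (LinearMap.mul' k H) ∘ₗ
      (TensorProduct.map LinearMap.id (s.toLinearMap ∘ₗ counit.toLinearMap)) ∘ₗ
        comul.toLinearMap = LinearMap.id
  counit_s : ∀ a : A, counit (s a) = a
  counit_t : ∀ a : A, counit (t a) = a
  antipode_s : ∀ a : A, antipode (s a) = t a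
  antipode_t : ∀ a : A, antipode (t a) = s a
  comul_t : ∀ a : A, comul (t a) = t a ⊗ₜ[k] 1
  comul_s : ∀ a : A, comul (s a) = 1 ⊗ₜ[k] s a
  antipode_left : (LinearMap.mul' k H) ∘ₗ
      (TensorProduct.map antipode.toLinearMap LinearMap.id) ∘ₗ comul.toLinearMap
    = s.toLinearMap ∘ₗ counit.toLinearMap
  antipode_right : (LinearMap.mul' k H) ∘ₗ
      (TensorProduct.map LinearMap.id antipode.toLinearMap) ∘ₗ comul.toLinearMap
    = t.toLinearMap ∘ₗ counit.toLinearMap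

variable {k A H : Type*} [CommRing k] [CommRing A] [CommRing H] [Algebra k A] [Algebra k H]

/-- The convolution product of right `A`-linear maps `H → A`:
`(α ∗ β)(h) = β(t(α(h₍₁₎)) · h₍₂₎) = β(t(α(h₍₁₎))) · β(h₍₂₎)`. -/
noncomputable def brtConv (D : CommHopfAlgebroid k A H) (α β : H →ₗ[k] A) : H →ₗ[k] A :=
  β ∘ₗ (LinearMap.mul' k H) ∘ₗ
    (TensorProduct.map (D.t.toLinearMap ∘ₗ α) LinearMap.id) ∘ₗ D.comul.toLinearMap

/-- `e` is a witness for axiom (BRT2) of a local biretraction `α`: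
`α(t(e)) = α(1)` and `α∘t` restricts to a bijection `A·e → A·α(1)`. -/
def IsBrtWitness (D : CommHopfAlgebroid k A H) (α : H →ₗ[k] A) (e : A) : Prop :=
  α (D.t e) = α 1 ∧ Set.BijOn (fun a => α (D.t a)) (idealOf e) (idealOf (α 1))

/-- A local biretraction of a commutative Hopf algebroid: a linear multiplicative
map `α : H → A` satisfying (BRT1) `α(s(a)) = a·α(1)` and (BRT2). -/
def IsBiretraction (D : CommHopfAlgebroid k A H) (α : H →ₗ[k] A) : Prop :=
  (∀ x y : H, α (x * y) = α x * α y) ∧ (∀ a : A, α (D.s a) = a * α 1) ∧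
    ∃ e : A, IsBrtWitness D α e

/-- **`((α∗β)∘t)⁻¹ = (α∘t)⁻¹ ∘ (β∘t)⁻¹`.** For local biretractions `α, β` with
(BRT2)-witnesses `e^α, e^β` and inverses `invα, invβ` of the restricted bijections
`α∘t : A·e^α → A·α(1)` and `β∘t : A·e^β → A·β(1)`, the composite `invα ∘ invβ` is a
two-sided inverse of the restricted bijection
`(α∗β)∘t : A·e^{α∗β} → A·(α∗β)(1)`, where `e^{α∗β} = x = (α∘t)⁻¹(e^β·α(1))`. -/
theorem brtConv_inverse_is_composition (D : CommHopfAlgebroid k A H)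
    (α β : H →ₗ[k] A) (hα : IsBiretraction D α) (hβ : IsBiretraction D β)
    (eα eβ : A) (heα : IsBrtWitness D α eα) (heβ : IsBrtWitness D β eβ)
    (invα invβ : A →ₗ[k] A)
    (hinvα1 : ∀ x ∈ idealOf eα, invα (α (D.t x)) = x)
    (hinvα2 : ∀ y ∈ idealOf (α 1), α (D.t (invα y)) = y)
    (hinvβ1 : ∀ x ∈ idealOf eβ, invβ (β (D.t x)) = x)
    (hinvβ2 : ∀ y ∈ idealOf (β 1), β (D.t (invβ y)) = y)
    (x : A) (hx : x ∈ idealOf eα) (hαx : α (D.t x) = eβ * α 1) :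
    (∀ y ∈ idealOf (brtConv D α β 1), brtConv D α β (D.t (invα (invβ y))) = y) ∧
    (∀ z ∈ idealOf x, invα (invβ (brtConv D α β (D.t z))) = z) := by
  obtain ⟨hαm, hαs, -⟩ := hα
  obtain ⟨hβm, hβs, -⟩ := hβ
  -- key computation: the convolution on `t a`
  have convt : ∀ a : A, brtConv D α β (D.t a) = β (D.t (α (D.t a))) := by
    intro a
    simp [brtConv, D.comul_t a, LinearMap.mul'_apply]
  have conv1 : brtConv D α β 1 = β (D.t (α 1)) := by
    have h1 : (1 : H) = D.t 1 := by simp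
    rw [h1, convt]
  -- idempotency of α 1
  have hα1 : α 1 * α 1 = α 1 := by
    conv_rhs => rw [show (1 : H) = 1 * 1 by ring]
    rw [hαm]
  have hβ1 : ∀ h : H, β h * β 1 = β h := by
    intro h
    rw [← hβm, mul_one]
  constructor
  · intro y hy
    obtain ⟨c, hc⟩ := hy
    simp only at hc
    rw [conv1] at hc
    have hyβ : y ∈ idealOf (β 1) := by
      refine ⟨c * β (D.t (α 1)), ?_⟩
      simp only
      rw [mul_assoc, hβ1, hc]
    obtain ⟨u, hu, huy⟩ := heβ.2.2.2 hyβ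
    simp only at huy
    have hinv : invβ y = u := by rw [← huy]; exact hinvβ1 u hu
    -- show u * α 1 = u via injectivity
    obtain ⟨d, hd⟩ := id hu
    simp only at hd
    have hmem2 : u * α 1 ∈ idealOf eβ := ⟨d * α 1, by simp only; rw [← hd]; ring⟩
    have heq : β (D.t u) = β (D.t (u * α 1)) := by
      rw [map_mul, hβm, huy, ← hc]
      have : β (D.t (α 1)) * β (D.t (α 1)) = β (D.t (α 1)) := by
        rw [← hβm, ← map_mul, hα1]
      rw [mul_assoc, this]
    have huα : u = u * α 1 := heβ.2.2.1 hu hmem2 heq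
    have hmemα : u ∈ idealOf (α 1) := ⟨u, huα.symm⟩
    rw [hinv, convt, hinvα2 u hmemα, huy]
  · intro z hz
    obtain ⟨c, hc⟩ := hz
    simp only at hc
    obtain ⟨d, hd⟩ := hx
    simp only at hd
    have hzeα : z ∈ idealOf eα := ⟨c * d, by simp only; rw [← hc, ← hd]; ring⟩
    have hαtz : α (D.t z) ∈ idealOf eβ := by
      refine ⟨α (D.t c) * α 1, ?_⟩
      simp only
      rw [← hc, map_mul, hαm, hαx]
      ring
    rw [convt, hinvβ1 _ hαtz, hinvα1 z hzeα]
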